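/- (Proposition on VIX) Suppose VIX_t² = −(2/Δ)·E[ln(S_{t+Δ}/S_t) | S_t, VIX_t] with Δ > 0, and the causality condition holds: S_{t+Δ} is conditionally independent of VIX_t given S_t. Then VIX_t² = −(2/Δ)·E[ln(S_{t+Δ}/S_t) | S_t] almost surely, i.e., VIX_t is σ(S_t)-measurable up to null sets. -/

import Mathlib

open MeasureTheory ProbabilityTheory Filter Topology

/-- Factorization of a simple function measurable w.r.t. `comap St` through `St`. -/
lemma simpleFunc_factor_aux {Ω : Type*} (St : Ω → ℝ)
    (φ : @MeasureTheory.SimpleFunc Ω (MeasurableSpace.comap St inferInstance) ℝ) :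
    ∃ G : ℝ → ℝ, Measurable G ∧ ∀ ω, φ ω = G (St ω) := by
  classical
  letI : MeasurableSpace Ω := MeasurableSpace.comap St inferInstance
  have hfib : ∀ c : ℝ, ∃ A : Set ℝ, MeasurableSet A ∧ St ⁻¹' A = φ ⁻¹' {c} := fun c =>
    MeasurableSpace.measurableSet_comap.mp (φ.measurableSet_fiber c)
  choose A hA hA' using hfib
  have key : ∀ (c : ℝ) (ω : Ω), St ω ∈ A c → φ ω = c := by
    intro c ω h
    have : ω ∈ St ⁻¹' A c := h
    rw [hA'] at this
    simpa using this
  set B : ℝ → Set ℝ := fun c => A c \ ⋃ c' ∈ (φ.range.filter (fun c' => c' < c)), A c' with hB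
  have hBm : ∀ c, MeasurableSet (B c) := fun c =>
    (hA c).diff (Finset.measurableSet_biUnion _ fun c' _ => hA c')
  refine ⟨fun x => ∑ c ∈ φ.range, (B c).indicator (fun _ => c) x,
    Finset.measurable_sum _ fun c _ => measurable_const.indicator (hBm c), fun ω => ?_⟩
  have hmem : St ω ∈ A (φ ω) := by
    have : ω ∈ φ ⁻¹' {φ ω} := by simp
    rw [← hA'] at this
    exact this
  have hunique : ∀ c, St ω ∈ A c → c = φ ω := fun c h => (key c ω h).symm
  have hmemB : St ω ∈ B (φ ω) := by
    refine ⟨hmem, ?_⟩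
    intro hx
    rw [Set.mem_iUnion₂] at hx
    obtain ⟨c, hc, hxc⟩ := hx
    rw [Finset.mem_filter] at hc
    exact absurd (hunique c hxc) (ne_of_lt hc.2)
  have hsum : (∑ c ∈ φ.range, (B c).indicator (fun _ => c) (St ω))
      = (B (φ ω)).indicator (fun _ => φ ω) (St ω) := by
    refine Finset.sum_eq_single_of_mem _ (φ.mem_range_self ω) (fun c _ hne => ?_)
    have hnot : St ω ∉ B c := fun hmem' => hne (hunique c hmem'.1)
    simp [Set.indicator_of_notMem hnot]
  show φ ω = ∑ c ∈ φ.range, (B c).indicator (fun _ => c) (St ω)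
  rw [hsum, Set.indicator_of_mem hmemB]

/-- Doob–Dynkin: a real function measurable w.r.t. `comap St` factors through `St`. -/
lemma measurable_comap_factor {Ω : Type*} {St g : Ω → ℝ}
    (hg : Measurable[MeasurableSpace.comap St inferInstance] g) :
    ∃ G : ℝ → ℝ, Measurable G ∧ ∀ ω, g ω = G (St ω) := by
  classical
  letI mc : MeasurableSpace Ω := MeasurableSpace.comap St inferInstance
  have hsm : StronglyMeasurable[mc] g := hg.stronglyMeasurable
  choose Gn hGnm hGn using fun n => simpleFunc_factor_aux St (hsm.approx n)
  set S := {x : ℝ | ∃ c, Tendsto (fun n => Gn n x) atTop (𝓝 c)} with hS_def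
  have hS : MeasurableSet S := measurableSet_exists_tendsto hGnm
  set H : ℕ → ℝ → ℝ := fun n x => if x ∈ S then Gn n x else 0 with hH
  have hHm : ∀ n, Measurable (H n) := fun n => Measurable.ite hS (hGnm n) measurable_const
  have hconv : ∀ x, ∃ c, Tendsto (fun n => H n x) atTop (𝓝 c) := by
    intro x
    by_cases hx : x ∈ S
    · exact ⟨hx.choose, by simpa [hH, if_pos hx] using hx.choose_spec⟩
    · exact ⟨0, by simp [hH, hx, tendsto_const_nhds]⟩
  set G : ℝ → ℝ := fun x => (hconv x).choose with hG
  have hGt : ∀ x, Tendsto (fun n => H n x) atTop (𝓝 (G x)) := fun x => (hconv x).choose_spec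
  have hGm : Measurable G := measurable_of_tendsto_metrizable hHm (tendsto_pi_nhds.2 hGt)
  refine ⟨G, hGm, fun ω => ?_⟩
  have h1 : Tendsto (fun n => Gn n (St ω)) atTop (𝓝 (g ω)) := by
    have h := hsm.tendsto_approx ω
    have he : ∀ n, Gn n (St ω) = hsm.approx n ω := fun n => (hGn n ω).symm
    simpa [he] using h
  have hxS : St ω ∈ S := ⟨g ω, h1⟩
  have h2 : Tendsto (fun n => H n (St ω)) atTop (𝓝 (g ω)) := by simpa [hH, hxS] using h1
  exact tendsto_nhds_unique h2 (hGt (St ω))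

/-- If two integrable functions have equal integrals over all sets `A ∩ C` with `A ∈ m₁`,
`C ∈ m₂`, then they have equal integrals over all `m₁ ⊔ m₂`-measurable sets. -/
lemma setIntegral_eq_on_sup {Ω : Type*} {m₁ m₂ : MeasurableSpace Ω} {mΩ : MeasurableSpace Ω}
    {μ : Measure Ω} [IsFiniteMeasure μ] (h1 : m₁ ≤ mΩ) (h2 : m₂ ≤ mΩ)
    {f g : Ω → ℝ} (hf : Integrable f μ) (hg : Integrable g μ)
    (h : ∀ A C, MeasurableSet[m₁] A → MeasurableSet[m₂] C →
      ∫ ω in A ∩ C, f ω ∂μ = ∫ ω in A ∩ C, g ω ∂μ) :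
    ∀ s, MeasurableSet[m₁ ⊔ m₂] s → ∫ ω in s, f ω ∂μ = ∫ ω in s, g ω ∂μ := by
  have hsup : m₁ ⊔ m₂ ≤ mΩ := sup_le h1 h2
  set π : Set (Set Ω) := {s | ∃ A C, MeasurableSet[m₁] A ∧ MeasurableSet[m₂] C ∧ s = A ∩ C}
    with hπ
  have hgen : m₁ ⊔ m₂ = MeasurableSpace.generateFrom π := by
    refine le_antisymm (sup_le ?_ ?_) (MeasurableSpace.generateFrom_le ?_)
    · intro s hs
      exact MeasurableSpace.measurableSet_generateFrom
        ⟨s, Set.univ, hs, MeasurableSet.univ, (Set.inter_univ s).symm⟩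
    · intro s hs
      exact MeasurableSpace.measurableSet_generateFrom
        ⟨Set.univ, s, MeasurableSet.univ, hs, (Set.univ_inter s).symm⟩
    · rintro s ⟨A, C, hA, hC, rfl⟩
      exact ((le_sup_left : m₁ ≤ m₁ ⊔ m₂) _ hA).inter ((le_sup_right : m₂ ≤ m₁ ⊔ m₂) _ hC)
  have hpi : IsPiSystem π := by
    rintro s ⟨A, C, hA, hC, rfl⟩ t ⟨A', C', hA', hC', rfl⟩ _
    exact ⟨A ∩ A', C ∩ C', hA.inter hA', hC.inter hC', by rw [Set.inter_inter_inter_comm]⟩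
  intro s hs
  refine @MeasurableSpace.induction_on_inter Ω (m₁ ⊔ m₂)
    (fun s _ => ∫ ω in s, f ω ∂μ = ∫ ω in s, g ω ∂μ) π hgen hpi ?_ ?_ ?_ ?_ s hs
  · simp
  · rintro t ⟨A, C, hA, hC, rfl⟩
    exact h A C hA hC
  · intro t htm ht
    have htm' : MeasurableSet[mΩ] t := hsup _ htm
    have huniv : ∫ ω, f ω ∂μ = ∫ ω, g ω ∂μ := by
      have := h Set.univ Set.univ MeasurableSet.univ MeasurableSet.univ
      simpa using this
    have h1' : ∫ ω in t, f ω ∂μ + ∫ ω in tᶜ, f ω ∂μ = ∫ ω, f ω ∂μ :=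
      integral_add_compl htm' hf
    have h2' : ∫ ω in t, g ω ∂μ + ∫ ω in tᶜ, g ω ∂μ = ∫ ω, g ω ∂μ :=
      integral_add_compl htm' hg
    linarith
  · intro u hdisj hum hu
    have hum' : ∀ i, MeasurableSet[mΩ] (u i) := fun i => hsup _ (hum i)
    have hif : ∫ ω in ⋃ i, u i, f ω ∂μ = ∑' i, ∫ ω in u i, f ω ∂μ :=
      integral_iUnion hum' hdisj hf.integrableOn
    have hig : ∫ ω in ⋃ i, u i, g ω ∂μ = ∑' i, ∫ ω in u i, g ω ∂μ :=
      integral_iUnion hum' hdisj hg.integrableOn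
    rw [hif, hig]
    exact tsum_congr hu

/-- Key lemma: under conditional independence of `m₂` and `m₃` given `m₁`, the conditional
expectation given `m₁ ⊔ m₃` of an integrable `m₁ ⊔ m₂`-measurable function equals the
conditional expectation given `m₁`. -/
lemma condexp_sup_of_condIndep {Ω : Type*} {m₁ m₂ m₃ : MeasurableSpace Ω}
    {mΩ : MeasurableSpace Ω} [StandardBorelSpace Ω]
    {μ : Measure Ω} [IsProbabilityMeasure μ] (h1 : m₁ ≤ mΩ) (h2 : m₂ ≤ mΩ) (h3 : m₃ ≤ mΩ)
    (hci : CondIndep m₁ m₂ m₃ h1 μ)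
    {f : Ω → ℝ} (hf : Integrable f μ) (hfm : StronglyMeasurable[m₁ ⊔ m₂] f) :
    μ[f | m₁ ⊔ m₃] =ᵐ[μ] μ[f | m₁] := by
  classical
  have h12 : m₁ ⊔ m₂ ≤ mΩ := sup_le h1 h2
  have h13 : m₁ ⊔ m₃ ≤ mΩ := sup_le h1 h3
  have ci' := (condIndep_iff m₁ m₂ m₃ h1 h2 h3 μ).mp hci
  -- boundedness of conditional probabilities
  have hbd : ∀ (m : MeasurableSpace Ω), m ≤ mΩ → ∀ (D : Set Ω), MeasurableSet[mΩ] D →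
      ∀ᵐ ω ∂μ, |(μ⟦D | m⟧) ω| ≤ 1 := by
    intro m hm D hD
    letI : MeasurableSpace Ω := mΩ
    have hind : Integrable (D.indicator fun _ => (1 : ℝ)) μ :=
      (integrable_const (1 : ℝ)).indicator hD
    have h0 : 0 ≤ᵐ[μ] μ⟦D | m⟧ :=
      condExp_nonneg (ae_of_all _ fun ω => Set.indicator_nonneg (fun _ _ => zero_le_one) ω)
    have h1'' : μ⟦D | m⟧ ≤ᵐ[μ] μ[(fun _ => (1 : ℝ)) | m] :=
      condExp_mono hind (integrable_const 1)
        (ae_of_all _ fun ω => Set.indicator_le_self' (fun _ _ => zero_le_one) ω)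
    have hc : μ[(fun _ => (1 : ℝ)) | m] = fun _ => (1 : ℝ) := condExp_const hm 1
    filter_upwards [h0, h1''] with ω ha hb
    rw [hc] at hb
    have ha' : (0 : ℝ) ≤ (μ⟦D | m⟧) ω := ha
    have hb' : (μ⟦D | m⟧) ω ≤ 1 := hb
    rw [abs_le]
    exact ⟨by linarith, hb'⟩
  -- product with a.e.-bounded-by-one factor is integrable
  have hmul : ∀ (g k : Ω → ℝ), Integrable g μ → AEStronglyMeasurable k μ →
      (∀ᵐ ω ∂μ, |k ω| ≤ 1) → Integrable (k * g) μ := by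
    intro g k hg hk hkb
    refine Integrable.mono' hg.norm (hk.mul hg.aestronglyMeasurable) ?_
    filter_upwards [hkb] with ω hω
    have : ‖k ω * g ω‖ = |k ω| * ‖g ω‖ := by
      rw [norm_mul, Real.norm_eq_abs]
    rw [Pi.mul_apply, this]
    exact mul_le_of_le_one_left (norm_nonneg _) hω
  have hprodind : ∀ (g : Ω → ℝ) (B : Set Ω),
      (g * Set.indicator B fun _ => (1 : ℝ)) = B.indicator g := by
    intro g B
    funext ω
    by_cases h : ω ∈ B <;> simp [h]
  -- Claim A : conditional probabilities of m₃-sets given m₁ ⊔ m₂ reduce to m₁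
  have claimA : ∀ B : Set Ω, MeasurableSet[m₃] B → (μ⟦B | m₁ ⊔ m₂⟧) =ᵐ[μ] (μ⟦B | m₁⟧) := by
    intro B hB
    have hB' : MeasurableSet[mΩ] B := h3 _ hB
    have hBint : Integrable (B.indicator fun _ => (1 : ℝ)) μ :=
      (integrable_const (1 : ℝ)).indicator hB'
    refine (ae_eq_condExp_of_forall_setIntegral_eq h12 hBint
      (fun s _ _ => integrable_condExp.integrableOn) ?_
      ((stronglyMeasurable_condExp.mono (le_sup_left : m₁ ≤ m₁ ⊔ m₂)).aestronglyMeasurable)).symm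
    intro s hs _
    refine setIntegral_eq_on_sup h1 h2 integrable_condExp hBint ?_ s hs
    intro A C hA hC
    have hA' : MeasurableSet[mΩ] A := h1 _ hA
    have hC' : MeasurableSet[mΩ] C := h2 _ hC
    have hCint1 : Integrable ((μ⟦B | m₁⟧) * Set.indicator C fun _ => (1 : ℝ)) μ := by
      rw [hprodind]
      exact integrable_condExp.indicator hC'
    -- left side
    have hL : ∫ ω in A ∩ C, (μ⟦B | m₁⟧) ω ∂μ
        = ∫ ω in A, ((μ⟦B | m₁⟧) * (μ⟦C | m₁⟧)) ω ∂μ := by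
      rw [← setIntegral_indicator hC']
      have e1 : ∫ ω in A, (C.indicator (μ⟦B | m₁⟧)) ω ∂μ
          = ∫ ω in A, ((μ⟦B | m₁⟧) * Set.indicator C fun _ => (1 : ℝ)) ω ∂μ := by
        rw [hprodind]
      rw [e1, ← setIntegral_condExp h1 hCint1 hA]
      refine setIntegral_congr_ae hA' ?_
      filter_upwards [condExp_mul_of_stronglyMeasurable_left stronglyMeasurable_condExp hCint1
        ((integrable_const (1 : ℝ)).indicator hC')] with ω hω _
      exact hω
    -- right side
    have hR : ∫ ω in A ∩ C, (B.indicator fun _ => (1 : ℝ)) ω ∂μ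
        = ∫ ω in A, ((μ⟦C | m₁⟧) * (μ⟦B | m₁⟧)) ω ∂μ := by
      rw [← setIntegral_indicator hC']
      have e1 : (C.indicator (B.indicator fun _ => (1 : ℝ)))
          = (C ∩ B).indicator fun _ => (1 : ℝ) := Set.indicator_indicator C B _
      rw [show ∫ ω in A, (C.indicator (B.indicator fun _ => (1 : ℝ))) ω ∂μ
          = ∫ ω in A, ((C ∩ B).indicator fun _ => (1 : ℝ)) ω ∂μ by rw [e1],
        ← setIntegral_condExp h1 ((integrable_const (1 : ℝ)).indicator (hC'.inter hB')) hA]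
      refine setIntegral_congr_ae hA' ?_
      filter_upwards [ci' C B hC hB] with ω hω _
      exact hω
    rw [hL, hR]
    refine setIntegral_congr_ae hA' (ae_of_all _ fun ω _ => ?_)
    simp [mul_comm]
  -- main argument
  refine (ae_eq_condExp_of_forall_setIntegral_eq h13 hf
    (fun s _ _ => integrable_condExp.integrableOn) ?_
    ((stronglyMeasurable_condExp.mono (le_sup_left : m₁ ≤ m₁ ⊔ m₃)).aestronglyMeasurable)).symm
  intro s hs _
  refine setIntegral_eq_on_sup h1 h3 integrable_condExp hf ?_ s hs
  intro A B hA hB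
  have hA' : MeasurableSet[mΩ] A := h1 _ hA
  have hB' : MeasurableSet[mΩ] B := h3 _ hB
  have hA12 : MeasurableSet[m₁ ⊔ m₂] A := (le_sup_left : m₁ ≤ m₁ ⊔ m₂) _ hA
  have hfB : Integrable (f * Set.indicator B fun _ => (1 : ℝ)) μ := by
    rw [hprodind]; exact hf.indicator hB'
  have hgB : Integrable ((μ[f | m₁]) * Set.indicator B fun _ => (1 : ℝ)) μ := by
    rw [hprodind]; exact integrable_condExp.indicator hB'
  have hkB : ∀ᵐ ω ∂μ, |(μ⟦B | m₁⟧) ω| ≤ 1 := hbd m₁ h1 B hB'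
  have hkBm : AEStronglyMeasurable (μ⟦B | m₁⟧) μ :=
    (stronglyMeasurable_condExp.mono h1).aestronglyMeasurable
  have hkf : Integrable ((μ⟦B | m₁⟧) * f) μ := hmul f _ hf hkBm hkB
  -- left side : ∫_{A∩B} μ[f|m₁] = ∫_A μ[f|m₁] * μ⟦B|m₁⟧
  have hL : ∫ ω in A ∩ B, (μ[f | m₁]) ω ∂μ
      = ∫ ω in A, ((μ[f | m₁]) * (μ⟦B | m₁⟧)) ω ∂μ := by
    rw [← setIntegral_indicator hB']
    have e1 : ∫ ω in A, (B.indicator (μ[f | m₁])) ω ∂μ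
        = ∫ ω in A, ((μ[f | m₁]) * Set.indicator B fun _ => (1 : ℝ)) ω ∂μ := by
      rw [hprodind]
    rw [e1, ← setIntegral_condExp h1 hgB hA]
    refine setIntegral_congr_ae hA' ?_
    filter_upwards [condExp_mul_of_stronglyMeasurable_left stronglyMeasurable_condExp hgB
      ((integrable_const (1 : ℝ)).indicator hB')] with ω hω _
    exact hω
  -- right side : ∫_{A∩B} f = ∫_A f * μ⟦B|m₁⟧
  have hR : ∫ ω in A ∩ B, f ω ∂μ = ∫ ω in A, (f * (μ⟦B | m₁⟧)) ω ∂μ := by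
    rw [← setIntegral_indicator hB']
    have e1 : ∫ ω in A, (B.indicator f) ω ∂μ
        = ∫ ω in A, (f * Set.indicator B fun _ => (1 : ℝ)) ω ∂μ := by
      rw [hprodind]
    rw [e1, ← setIntegral_condExp h12 hfB hA12]
    refine setIntegral_congr_ae hA' ?_
    filter_upwards [condExp_mul_of_stronglyMeasurable_left hfm hfB
      ((integrable_const (1 : ℝ)).indicator hB'), claimA B hB] with ω hω hω2 _
    rw [hω, Pi.mul_apply, Pi.mul_apply, hω2]
  -- bridge : ∫_A f * μ⟦B|m₁⟧ = ∫_A μ[f|m₁] * μ⟦B|m₁⟧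
  have hBr : ∫ ω in A, (f * (μ⟦B | m₁⟧)) ω ∂μ
      = ∫ ω in A, ((μ[f | m₁]) * (μ⟦B | m₁⟧)) ω ∂μ := by
    have e1 : ∫ ω in A, (f * (μ⟦B | m₁⟧)) ω ∂μ = ∫ ω in A, ((μ⟦B | m₁⟧) * f) ω ∂μ := by
      refine setIntegral_congr_ae hA' (ae_of_all _ fun ω _ => ?_)
      simp [mul_comm]
    rw [e1, ← setIntegral_condExp h1 hkf hA]
    refine setIntegral_congr_ae hA' ?_
    filter_upwards [condExp_mul_of_stronglyMeasurable_left stronglyMeasurable_condExp hkf hf]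
      with ω hω _
    rw [hω, Pi.mul_apply, Pi.mul_apply, mul_comm]
  rw [hL, hR, hBr]

/-- If the causality condition held for the S&P 500 / VIX pair, then the VIX would be a
function of the spot alone: `VIX_t² = −(2/Δ)·E[ln(S_{t+Δ}/S_t) | S_t]` a.s., and `VIX_t`
is σ(S_t)-measurable up to null sets. -/
theorem vix_function_of_spot_under_causality
    {Ω : Type*} {mΩ : MeasurableSpace Ω} [StandardBorelSpace Ω]
    (μ : Measure Ω) [IsProbabilityMeasure μ]
    (Δ : ℝ) (hΔ : 0 < Δ)
    (St StΔ VIX : Ω → ℝ)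
    (hSt : Measurable St) (hStΔ : Measurable StΔ) (hVIX : Measurable VIX)
    (hStpos : ∀ ω, 0 < St ω) (hStΔpos : ∀ ω, 0 < StΔ ω) (hVIXpos : ∀ ω, 0 < VIX ω)
    (hint : Integrable (fun ω => Real.log (StΔ ω / St ω)) μ)
    (hle : MeasurableSpace.comap St inferInstance ≤ mΩ)
    -- causality: S_{t+Δ} ⊥ VIX_t given S_t
    (hci : CondIndep (MeasurableSpace.comap St inferInstance)
      (MeasurableSpace.comap StΔ inferInstance)
      (MeasurableSpace.comap VIX inferInstance) hle μ)
    -- structural link: VIX_t² = −(2/Δ)·E[ln(S_{t+Δ}/S_t) | S_t, VIX_t]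
    (hstruct : (fun ω => (VIX ω) ^ 2) =ᵐ[μ]
      fun ω => -(2 / Δ) *
        condExp (MeasurableSpace.comap St inferInstance ⊔ MeasurableSpace.comap VIX inferInstance)
          μ (fun ω' => Real.log (StΔ ω' / St ω')) ω) :
    ((fun ω => (VIX ω) ^ 2) =ᵐ[μ]
      fun ω => -(2 / Δ) *
        condExp (MeasurableSpace.comap St inferInstance) μ
          (fun ω' => Real.log (StΔ ω' / St ω')) ω) ∧
    ∃ G : ℝ → ℝ, Measurable G ∧ VIX =ᵐ[μ] fun ω => G (St ω) := by
  set mS : MeasurableSpace Ω := MeasurableSpace.comap St inferInstance with hmS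
  set mSΔ : MeasurableSpace Ω := MeasurableSpace.comap StΔ inferInstance with hmSΔ
  set mV : MeasurableSpace Ω := MeasurableSpace.comap VIX inferInstance with hmV
  set f : Ω → ℝ := fun ω => Real.log (StΔ ω / St ω) with hf
  letI : MeasurableSpace Ω := mΩ
  have hle2 : mSΔ ≤ mΩ := hStΔ.comap_le
  have hle3 : mV ≤ mΩ := hVIX.comap_le
  have hStm : Measurable[mS ⊔ mSΔ] St :=
    (comap_measurable St).mono (le_sup_left : mS ≤ mS ⊔ mSΔ) le_rfl
  have hStΔm : Measurable[mS ⊔ mSΔ] StΔ :=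
    (comap_measurable StΔ).mono (le_sup_right : mSΔ ≤ mS ⊔ mSΔ) le_rfl
  have hfm : StronglyMeasurable[mS ⊔ mSΔ] f :=
    (Real.measurable_log.comp (hStΔm.div hStm)).stronglyMeasurable
  have key : μ[f | mS ⊔ mV] =ᵐ[μ] μ[f | mS] :=
    condexp_sup_of_condIndep hle hle2 hle3 hci hint hfm
  have conj1 : (fun ω => (VIX ω) ^ 2) =ᵐ[μ] fun ω => -(2 / Δ) * (μ[f | mS]) ω := by
    filter_upwards [hstruct, key] with ω h1 h2
    rw [h1, h2]
  refine ⟨conj1, ?_⟩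
  have hcm : Measurable[mS] (fun ω => Real.sqrt (-(2 / Δ) * (μ[f | mS]) ω)) :=
    Real.continuous_sqrt.measurable.comp
      (measurable_const.mul stronglyMeasurable_condExp.measurable)
  obtain ⟨G, hGm, hGf⟩ := measurable_comap_factor (St := St) hcm
  refine ⟨G, hGm, ?_⟩
  filter_upwards [conj1] with ω h
  have h1 : VIX ω = Real.sqrt ((VIX ω) ^ 2) := (Real.sqrt_sq (hVIXpos ω).le).symm
  rw [h1, h, ← hGf ω]
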